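/- For every integer m ≥ 1, the weight set of the ternary Reed–Muller code RM_3(2m−2, m) equals {0} ∪ {3, 4, 5, …, 3^m}. -/

import Mathlib

/-- Hamming weight: the number of nonzero coordinates. -/
noncomputable def hwt {ι F : Type*} [Zero F] (c : ι → F) : ℕ := Set.ncard {i | c i ≠ 0}

/-- The `q`-ary Reed–Muller code of order `s` in `m` variables over the field `F` of
cardinality `q`: all evaluation vectors, on the points of `F^m`, of `m`-variate
polynomials of total degree at most `s`. -/
def RMcode (F : Type*) [CommSemiring F] (s m : ℕ) : Set ((Fin m → F) → F) :=
  {c | ∃ f : MvPolynomial (Fin m) F, f.totalDegree ≤ s ∧ ∀ P, MvPolynomial.eval P f = c P}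

open MvPolynomial Finset

section Aux

lemma hwt_eq_card {ι F : Type*} [Fintype ι] [Zero F] (c : ι → F)
    [DecidablePred fun i => c i ≠ 0] :
    hwt c = (Finset.univ.filter fun i => c i ≠ 0).card := by
  rw [hwt, Set.ncard_eq_toFinset_card', Set.toFinset_setOf]

lemma hwt_eq_natCard {ι F : Type*} [Zero F] (c : ι → F) :
    hwt c = Nat.card {i // c i ≠ 0} := by
  rw [hwt, ← Nat.card_coe_set_eq]; rfl

lemma hwt_zero {ι F : Type*} [Zero F] : hwt (fun _ : ι => (0 : F)) = 0 := by
  simp [hwt]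

lemma tdeg_sub_le {σ R : Type*} [CommRing R] (p q : MvPolynomial σ R) :
    (p - q).totalDegree ≤ max p.totalDegree q.totalDegree := by
  rw [sub_eq_add_neg]
  exact (MvPolynomial.totalDegree_add _ _).trans (by rw [MvPolynomial.totalDegree_neg])

lemma sum_eval_eq_zero {m : ℕ} (f : MvPolynomial (Fin m) (ZMod 3))
    (h : f.totalDegree < 2 * m) :
    ∑ P : Fin m → ZMod 3, MvPolynomial.eval P f = 0 := by
  simp_rw [eval_eq']
  rw [Finset.sum_comm]
  refine Finset.sum_eq_zero fun d hd => ?_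
  rw [← Finset.mul_sum, ← Fintype.prod_sum (fun (i : Fin m) (t : ZMod 3) => t ^ d i)]
  have hex : ∃ i : Fin m, d i < 2 := by
    by_contra hc
    push_neg at hc
    have h1 : (d.sum fun _ e => e) ≤ f.totalDegree := le_totalDegree hd
    have h2 : (d.sum fun _ e => e) = ∑ i : Fin m, d i := by
      rw [Finsupp.sum_fintype]; simp
    have h3 : 2 * m = ∑ _i : Fin m, 2 := by simp [mul_comm]
    have h4 : (∑ _i : Fin m, 2) ≤ ∑ i : Fin m, d i :=
      Finset.sum_le_sum fun i _ => hc i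
    omega
  obtain ⟨i, hi⟩ := hex
  rw [Finset.prod_eq_zero (Finset.mem_univ i), mul_zero]
  interval_cases h : d i <;> decide

/-- Forward direction: every codeword weight is `0` or in `[3, 3^m]`. -/
lemma wt_forward {m : ℕ} (hm : 1 ≤ m) (f : MvPolynomial (Fin m) (ZMod 3))
    (hdeg : f.totalDegree ≤ 2 * m - 2) :
    hwt (fun P => eval P f) = 0 ∨
      (3 ≤ hwt (fun P => eval P f) ∧ hwt (fun P => eval P f) ≤ 3 ^ m) := by
  classical
  rw [hwt_eq_card]
  set T := Finset.univ.filter fun P : Fin m → ZMod 3 => eval P f ≠ 0 with hT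
  have hub : T.card ≤ 3 ^ m := by
    refine (Finset.card_filter_le _ _).trans ?_
    simp [Fintype.card_fun]
  have hsum : ∑ P : Fin m → ZMod 3, eval P f = 0 :=
    sum_eval_eq_zero f (by omega)
  have h1 : T.card ≠ 1 := by
    intro h
    obtain ⟨P, hP⟩ := Finset.card_eq_one.mp h
    have hPin : P ∈ T := hP ▸ Finset.mem_singleton_self P
    have hPne : eval P f ≠ 0 := (Finset.mem_filter.mp hPin).2
    have : ∑ Q : Fin m → ZMod 3, eval Q f = eval P f := by
      refine Finset.sum_eq_single P (fun Q _ hQ => ?_) (fun h => absurd (Finset.mem_univ _) h)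
      by_contra hne
      exact hQ (Finset.mem_singleton.mp (hP ▸ (Finset.mem_filter.mpr ⟨Finset.mem_univ _, hne⟩)))
    exact hPne (this ▸ hsum)
  have h2 : T.card ≠ 2 := by
    intro h
    obtain ⟨P, Q, hne, hPQ⟩ := Finset.card_eq_two.mp h
    have hPin : eval P f ≠ 0 := by
      have : P ∈ T := hPQ ▸ Finset.mem_insert_self _ _
      exact (Finset.mem_filter.mp this).2
    have hQin : eval Q f ≠ 0 := by
      have : Q ∈ T := hPQ ▸ Finset.mem_insert_of_mem (Finset.mem_singleton_self Q)
      exact (Finset.mem_filter.mp this).2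
    have key : ∀ g : (Fin m → ZMod 3) → ZMod 3, (∀ R, eval R f = 0 → g R = 0) →
        ∑ R : Fin m → ZMod 3, g R = g P + g Q := by
      intro g hg
      have : ∑ R ∈ T, g R = ∑ R : Fin m → ZMod 3, g R := by
        refine Finset.sum_filter_of_ne fun R _ hR => ?_
        intro h0
        exact hR (hg R h0)
      rw [← this, hPQ, Finset.sum_pair hne]
    have s1 : eval P f + eval Q f = 0 := by
      have := key (fun R => eval R f) (fun R h => h)
      rw [hsum] at this; exact this.symm
    obtain ⟨i, hi⟩ := Function.ne_iff.mp hne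
    have hdeg2 : (f * X i).totalDegree < 2 * m := by
      refine lt_of_le_of_lt ((totalDegree_mul _ _).trans ?_) (by omega : 2 * m - 1 < 2 * m)
      rw [totalDegree_X]
      omega
    have s2 : eval P f * P i + eval Q f * Q i = 0 := by
      have hz := sum_eval_eq_zero (f * X i) hdeg2
      simp_rw [map_mul, eval_X] at hz
      have := key (fun R => eval R f * R i) (fun R h => by rw [h, zero_mul])
      rw [hz] at this; exact this.symm
    have hQP : eval Q f = - eval P f := by linear_combination s1
    rw [hQP] at s2
    have : eval P f * (P i - Q i) = 0 := by ring_nf; ring_nf at s2; linear_combination s2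
    rcases mul_eq_zero.mp this with h | h
    · exact hPin h
    · exact hi (by linear_combination h)
  omega

lemma hwt_slices {m : ℕ} (c : ZMod 3 → (Fin m → ZMod 3) → ZMod 3) :
    hwt (fun P : Fin (m+1) → ZMod 3 => c (P (Fin.last m)) (fun i => P i.castSucc))
      = ∑ y : ZMod 3, hwt (c y) := by
  simp_rw [hwt_eq_natCard, Nat.card_eq_fintype_card]
  rw [← Fintype.card_sigma]
  refine Fintype.card_congr ?_
  refine
  { toFun := fun P => ⟨P.1 (Fin.last m), ⟨fun i => P.1 i.castSucc, P.2⟩⟩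
    invFun := fun x => ⟨Fin.snoc x.2.1 x.1, by
      simpa [Fin.snoc_last, Fin.snoc_castSucc] using x.2.2⟩
    left_inv := fun P => by
      ext i
      refine Fin.lastCases ?_ ?_ i <;> simp [Fin.snoc_last, Fin.snoc_castSucc]
    right_inv := fun x => by
      obtain ⟨y, x, h⟩ := x
      refine Sigma.ext (by simp) ?_
      refine (Subtype.heq_iff_coe_eq ?_).mpr ?_
      · intro z; simp [Fin.snoc_last]
      · funext i; simp [Fin.snoc_castSucc] }

/-- Gluing three slice polynomials along a new variable. -/
lemma glue {m : ℕ} (hm : 1 ≤ m) (f : ZMod 3 → MvPolynomial (Fin m) (ZMod 3))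
    (hdeg : ∀ y, (f y).totalDegree ≤ 2 * m - 2) :
    ∃ g : MvPolynomial (Fin (m + 1)) (ZMod 3), g.totalDegree ≤ 2 * (m + 1) - 2 ∧
      hwt (fun P => eval P g) = ∑ y : ZMod 3, hwt (fun x => eval x (f y)) := by
  set L : ZMod 3 → MvPolynomial (Fin (m + 1)) (ZMod 3) :=
    fun y => 1 - (X (Fin.last m) - C y) ^ 2 with hL
  refine ⟨∑ y : ZMod 3, rename Fin.castSucc (f y) * L y, ?_, ?_⟩
  · refine (totalDegree_finset_sum _ _).trans ?_
    refine Finset.sup_le fun y _ => ?_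
    refine (totalDegree_mul _ _).trans ?_
    have h1 : (rename (Fin.castSucc) (f y)).totalDegree ≤ 2 * m - 2 :=
      (totalDegree_rename_le _ _).trans (hdeg y)
    have h2 : (L y).totalDegree ≤ 2 := by
      rw [hL]
      refine (tdeg_sub_le _ _).trans ?_
      have : ((X (Fin.last m) - C y : MvPolynomial (Fin (m+1)) (ZMod 3)) ^ 2).totalDegree ≤ 2 := by
        refine (totalDegree_pow _ _).trans ?_
        have : (X (Fin.last m) - C y : MvPolynomial (Fin (m+1)) (ZMod 3)).totalDegree ≤ 1 :=
          (tdeg_sub_le _ _).trans (by simp [totalDegree_X])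
        omega
      simpa using this
    omega
  · have hev : ∀ P : Fin (m+1) → ZMod 3,
        eval P (∑ y : ZMod 3, rename Fin.castSucc (f y) * L y)
          = eval (fun i => P i.castSucc) (f (P (Fin.last m))) := by
      intro P
      rw [map_sum]
      rw [Finset.sum_eq_single (P (Fin.last m))]
      · rw [map_mul, eval_rename]
        have : eval P (L (P (Fin.last m))) = 1 := by simp [hL]
        rw [this, mul_one]
        rfl
      · intro y _ hy
        rw [map_mul]
        have : eval P (L y) = 0 := by
          have : ∀ a b : ZMod 3, b ≠ a → 1 - (a - b) ^ 2 = 0 := by decide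
          simp [hL, this _ _ hy]
        rw [this, mul_zero]
      · intro h; exact absurd (Finset.mem_univ _) h
    simp_rw [hev]
    exact hwt_slices (fun y x => eval x (f y))

/-- Base case `m = 2`: all weights in `[3, 9]` occur for degree-2 polynomials. -/
lemma base2 (w : ℕ) (h3 : 3 ≤ w) (h9 : w ≤ 9) :
    ∃ f : MvPolynomial (Fin 2) (ZMod 3), f.totalDegree ≤ 2 ∧
      hwt (fun P => eval P f) = w := by
  interval_cases w
  · refine ⟨1 - X 0 ^ 2, (tdeg_sub_le _ _).trans (by simp [totalDegree_X_pow]), ?_⟩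
    have : (fun P : Fin 2 → ZMod 3 => eval P (1 - X 0 ^ 2))
        = fun P => 1 - P 0 ^ 2 := by funext P; simp
    rw [this, hwt_eq_card]; decide
  · refine ⟨X 0 ^ 2 - X 1 ^ 2, (tdeg_sub_le _ _).trans (by simp [totalDegree_X_pow]), ?_⟩
    have : (fun P : Fin 2 → ZMod 3 => eval P (X 0 ^ 2 - X 1 ^ 2))
        = fun P => P 0 ^ 2 - P 1 ^ 2 := by funext P; simp
    rw [this, hwt_eq_card]; decide
  · refine ⟨X 0 ^ 2 + X 1 ^ 2 - 1, (tdeg_sub_le _ _).trans ?_, ?_⟩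
    · have := (totalDegree_add (X 0 ^ 2 : MvPolynomial (Fin 2) (ZMod 3)) (X 1 ^ 2))
      simp only [totalDegree_X_pow, totalDegree_one] at this ⊢
      omega
    have : (fun P : Fin 2 → ZMod 3 => eval P (X 0 ^ 2 + X 1 ^ 2 - 1))
        = fun P => P 0 ^ 2 + P 1 ^ 2 - 1 := by funext P; simp
    rw [this, hwt_eq_card]; decide
  · refine ⟨X 0 ^ 2 - X 1,
      (tdeg_sub_le _ _).trans (by simp [totalDegree_X_pow, totalDegree_X]), ?_⟩
    have : (fun P : Fin 2 → ZMod 3 => eval P (X 0 ^ 2 - X 1))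
        = fun P => P 0 ^ 2 - P 1 := by funext P; simp
    rw [this, hwt_eq_card]; decide
  · refine ⟨X 0 * X 1 - 1, (tdeg_sub_le _ _).trans ?_, ?_⟩
    · have := totalDegree_mul (X 0 : MvPolynomial (Fin 2) (ZMod 3)) (X 1)
      simp only [totalDegree_X, totalDegree_one] at this ⊢
      omega
    have : (fun P : Fin 2 → ZMod 3 => eval P (X 0 * X 1 - 1))
        = fun P => P 0 * P 1 - 1 := by funext P; simp
    rw [this, hwt_eq_card]; decide
  · refine ⟨X 0 ^ 2 + X 1 ^ 2, ?_, ?_⟩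
    · have := (totalDegree_add (X 0 ^ 2 : MvPolynomial (Fin 2) (ZMod 3)) (X 1 ^ 2))
      simp only [totalDegree_X_pow, totalDegree_one] at this ⊢
      omega
    have : (fun P : Fin 2 → ZMod 3 => eval P (X 0 ^ 2 + X 1 ^ 2))
        = fun P => P 0 ^ 2 + P 1 ^ 2 := by funext P; simp
    rw [this, hwt_eq_card]; decide
  · refine ⟨1, by simp, ?_⟩
    have : (fun P : Fin 2 → ZMod 3 => eval P (1 : MvPolynomial (Fin 2) (ZMod 3)))
        = fun _ => 1 := by funext P; simp
    rw [this, hwt_eq_card]; decide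

lemma split3 (N w : ℕ) (hN : 9 ≤ N) (h3 : 3 ≤ w) (hw : w ≤ 3 * N) :
    ∃ a b c : ℕ, (a = 0 ∨ (3 ≤ a ∧ a ≤ N)) ∧ (b = 0 ∨ (3 ≤ b ∧ b ≤ N)) ∧
      (c = 0 ∨ (3 ≤ c ∧ c ≤ N)) ∧ a + b + c = w := by
  rcases le_or_gt w N with h | h
  · exact ⟨w, 0, 0, Or.inr ⟨h3, h⟩, Or.inl rfl, Or.inl rfl, by omega⟩
  rcases le_or_gt w (2 * N) with h2 | h2
  · exact ⟨min N (w - 3), w - min N (w - 3), 0, by omega, by omega, by omega, by omega⟩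
  · exact ⟨N, min N (w - N - 3), w - N - min N (w - N - 3), by omega, by omega, by omega,
      by omega⟩

lemma hwt_eval_zero {m : ℕ} :
    hwt (fun P : Fin m → ZMod 3 => eval P (0 : MvPolynomial (Fin m) (ZMod 3))) = 0 := by
  simp [hwt]

/-- Existence of codewords of every weight in `{0} ∪ [3, 3^m]`, for `m ≥ 2`. -/
lemma exists_wt : ∀ m, 2 ≤ m → ∀ w, (w = 0 ∨ (3 ≤ w ∧ w ≤ 3 ^ m)) →
    ∃ f : MvPolynomial (Fin m) (ZMod 3), f.totalDegree ≤ 2 * m - 2 ∧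
      hwt (fun P => eval P f) = w := by
  intro m hm
  induction m, hm using Nat.le_induction with
  | base =>
    intro w hw
    rcases hw with rfl | ⟨h3, h9⟩
    · exact ⟨0, by simp, hwt_eval_zero⟩
    · exact base2 w h3 (by norm_num at h9 ⊢; omega)
  | succ m hm IH =>
    intro w hw
    rcases hw with rfl | ⟨h3, hle⟩
    · exact ⟨0, by simp, hwt_eval_zero⟩
    have hN : 9 ≤ 3 ^ m := by
      calc (9 : ℕ) = 3 ^ 2 := by norm_num
      _ ≤ 3 ^ m := Nat.pow_le_pow_right (by norm_num) hm
    have hle' : w ≤ 3 * 3 ^ m := by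
      rw [pow_succ] at hle; omega
    obtain ⟨a, b, c, ha, hb, hc, habc⟩ := split3 (3 ^ m) w hN h3 hle'
    obtain ⟨fa, hfa, hwa⟩ := IH a ha
    obtain ⟨fb, hfb, hwb⟩ := IH b hb
    obtain ⟨fc, hfc, hwc⟩ := IH c hc
    set F : ZMod 3 → MvPolynomial (Fin m) (ZMod 3) :=
      fun y => if y = 0 then fa else if y = 1 then fb else fc with hF
    have hFdeg : ∀ y, (F y).totalDegree ≤ 2 * m - 2 := by
      intro y; rw [hF]; dsimp only; split_ifs <;> assumption
    obtain ⟨g, hgdeg, hgwt⟩ := glue (by omega) F hFdeg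
    refine ⟨g, hgdeg, ?_⟩
    rw [hgwt]
    have huniv : (Finset.univ : Finset (ZMod 3)) = {0, 1, 2} := by decide
    rw [huniv, Finset.sum_insert (by decide), Finset.sum_insert (by decide),
      Finset.sum_singleton]
    have e0 : F 0 = fa := by rw [hF]; simp
    have e1 : F 1 = fb := by rw [hF]; norm_num [show (1 : ZMod 3) ≠ 0 by decide]
    have e2 : F 2 = fc := by rw [hF]; norm_num [show (2 : ZMod 3) ≠ 0 by decide, show (2 : ZMod 3) ≠ 1 by decide]
    rw [e0, e1, e2, hwa, hwb, hwc]
    omega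

end Aux

/-- For `m ≥ 1`, the weight set of the ternary Reed–Muller code `RM_3(2m-2, m)` equals
`{0} ∪ {3, 4, 5, …, 3^m}`. -/
theorem stmt16 (m : ℕ) (hm : 1 ≤ m) :
    {w : ℕ | ∃ c ∈ RMcode (ZMod 3) (2 * m - 2) m, hwt c = w}
      = {0} ∪ Set.Icc 3 (3 ^ m) := by
  ext w
  simp only [Set.mem_setOf_eq, Set.mem_union, Set.mem_singleton_iff, Set.mem_Icc]
  constructor
  · rintro ⟨c, ⟨f, hdeg, hf⟩, rfl⟩
    have hc : c = fun P => eval P f := by funext P; rw [hf]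
    rw [hc]
    exact wt_forward hm f hdeg
  · rintro (rfl | ⟨h3, hle⟩)
    · refine ⟨fun _ => 0, ⟨0, by simp, by simp⟩, ?_⟩
      simp [hwt]
    · rcases eq_or_lt_of_le hm with hm1 | hm2
      · subst hm1
        have hw3 : w = 3 := by norm_num at hle; omega
        subst hw3
        refine ⟨fun _ => 1, ⟨1, by simp, by simp⟩, ?_⟩
        rw [hwt_eq_card]
        decide
      · obtain ⟨f, hdeg, hwf⟩ := exists_wt m hm2 w (Or.inr ⟨h3, hle⟩)
        exact ⟨fun P => eval P f, ⟨f, hdeg, fun P => rfl⟩, hwf⟩
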